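/- arXiv:1301.6149 — 4 statements merged into one kernel-verified Lean document; each statement's English description precedes it below -/
import Mathlib

section
/- Let U and V be Hilbert spaces and B : U × V → ℝ a bounded bilinear form satisfying: (i) |B(u,v)| ≤ C‖u‖‖v‖ for all u,v; (ii) sup_{u≠0} B(u,v)/‖u‖ ≥ α‖v‖ for all v ∈ V with α > 0; (iii) if B(u,v) = 0 for all v ∈ V then u = 0. Then for every bounded linear functional L on V there exists a unique u ∈ U with B(u,v) = L(v) for all v ∈ V, and ‖u‖ ≤ ‖L‖/α. -/
open scoped RealInnerProductSpace

/-- Babuška–Lax–Milgram theorem: continuity, test-side inf-sup and trial-side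
injectivity imply well-posedness with stability constant `1/α`. -/
theorem babuska_lax_milgram
    {U V : Type*} [NormedAddCommGroup U] [InnerProductSpace ℝ U] [CompleteSpace U]
    [NormedAddCommGroup V] [InnerProductSpace ℝ V] [CompleteSpace V]
    (B : U →L[ℝ] V →L[ℝ] ℝ) (C α : ℝ) (hα : 0 < α)
    (hcont : ∀ u v, |B u v| ≤ C * ‖u‖ * ‖v‖)
    (hinfsup : ∀ v : V, α * ‖v‖ ≤ ⨆ u : {u : U // u ≠ 0}, B u.1 v / ‖u.1‖)
    (hinj : ∀ u : U, (∀ v : V, B u v = 0) → u = 0) :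
    ∀ L : V →L[ℝ] ℝ, ∃ u : U, (∀ v : V, B u v = L v) ∧ ‖u‖ ≤ ‖L‖ / α ∧
      ∀ u' : U, (∀ v : V, B u' v = L v) → u' = u := by
  intro L
  -- the operator `A : V →L U` with `⟪A v, u⟫ = B u v`
  set A : V →L[ℝ] U :=
    ((InnerProductSpace.toDual ℝ U).symm.toContinuousLinearEquiv :
        (U →L[ℝ] ℝ) ≃L[ℝ] U).toContinuousLinearMap.comp B.flip with hA
  have hAapp : ∀ (v : V) (u : U), ⟪A v, u⟫ = B u v := by
    intro v u
    simp [hA, InnerProductSpace.toDual_symm_apply]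
  -- `A` is bounded below
  have hbelow : ∀ v : V, α * ‖v‖ ≤ ‖A v‖ := by
    intro v
    refine le_trans (hinfsup v) ?_
    by_cases hne : Nonempty {u : U // u ≠ 0}
    · refine ciSup_le fun u => ?_
      rw [div_le_iff₀ (norm_pos_iff.2 u.2)]
      calc B u.1 v = ⟪A v, u.1⟫ := (hAapp v u.1).symm
        _ ≤ ‖A v‖ * ‖u.1‖ := (real_inner_le_norm _ _)
    · rw [not_nonempty_iff] at hne
      rw [Real.iSup_of_isEmpty]
      exact norm_nonneg _
  have hbelow' : ∀ v : V, ‖v‖ ≤ α⁻¹ * ‖A v‖ := by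
    intro v
    rw [le_inv_mul_iff₀ hα]
    exact hbelow v
  have hanti : AntilipschitzWith (⟨α⁻¹, by positivity⟩ : NNReal) A :=
    A.antilipschitz_of_bound fun v => by exact hbelow' v
  -- `A` is injective
  have hker : LinearMap.ker (A : V →ₗ[ℝ] U) = ⊥ := by
    exact LinearMap.ker_eq_bot.mpr hanti.injective
  -- `A` has closed range
  have hclosed : IsClosed (Set.range A) :=
    hanti.isClosed_range A.uniformContinuous
  have hclosed' : IsClosed ((LinearMap.range (A : V →ₗ[ℝ] U) : Submodule ℝ U) : Set U) := by
    rwa [LinearMap.coe_range]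
  haveI : CompleteSpace (LinearMap.range (A : V →ₗ[ℝ] U)) := hclosed'.completeSpace_coe
  -- `A` has dense range (orthogonal complement is trivial)
  have hrange : LinearMap.range (A : V →ₗ[ℝ] U) = ⊤ := by
    rw [← Submodule.orthogonal_eq_bot_iff]
    rw [Submodule.eq_bot_iff]
    intro u hu
    refine hinj u fun v => ?_
    have := hu (A v) (LinearMap.mem_range_self _ v)
    rw [← hAapp v u]
    exact this
  -- the continuous linear equivalence
  let e : V ≃L[ℝ] U := ContinuousLinearEquiv.ofBijective A hker hrange
  have heA : ∀ v, e v = A v := fun v => rfl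
  have hesymm : ∀ w : U, A (e.symm w) = w := fun w => e.apply_symm_apply w
  -- the solution
  set u : U := (InnerProductSpace.toDual ℝ U).symm
      (L.comp (e.symm : U ≃L[ℝ] V).toContinuousLinearMap) with hu
  have hsol : ∀ v : V, B u v = L v := by
    intro v
    rw [← hAapp v u, real_inner_comm, hu, InnerProductSpace.toDual_symm_apply]
    simp only [ContinuousLinearMap.comp_apply, ContinuousLinearEquiv.coe_coe]
    congr 1
    exact e.symm_apply_apply v
  refine ⟨u, hsol, ?_, ?_⟩
  · -- norm bound
    have h1 : ‖u‖ = ‖L.comp (e.symm : U ≃L[ℝ] V).toContinuousLinearMap‖ := by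
      rw [hu]; exact (InnerProductSpace.toDual ℝ U).symm.norm_map _
    rw [h1, div_eq_mul_inv]
    refine ContinuousLinearMap.opNorm_le_bound _ (by positivity) fun w => ?_
    calc ‖L (e.symm w)‖ ≤ ‖L‖ * ‖e.symm w‖ := L.le_opNorm _
      _ ≤ ‖L‖ * (α⁻¹ * ‖A (e.symm w)‖) := by
          exact mul_le_mul_of_nonneg_left (hbelow' _) (norm_nonneg _)
      _ = ‖L‖ * α⁻¹ * ‖w‖ := by rw [hesymm]; ring
  · -- uniqueness
    intro u' hu'
    have : ∀ v, B (u' - u) v = 0 := by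
      intro v; simp [hu' v, hsol v]
    have := hinj _ this
    exact sub_eq_zero.mp this
end

section
/- Let K be the unit square and p ≥ 0. If z ∈ Q_{p+2}(K) vanishes at the four vertices of K, satisfies ∫_K z v = 0 for all v ∈ Q_p(K), and ∫_{∂K} z γ = 0 for all γ that are polynomials of degree ≤ p on each edge of K, then z = 0. -/
open MvPolynomial intervalIntegral

/-- The tensor-product polynomial space `Q_r` of degree at most `r` in each of
the two variables separately. -/
noncomputable def Qsp (r : ℕ) : Submodule ℝ (MvPolynomial (Fin 2) ℝ) :=
  Submodule.span ℝ {q | ∃ i ≤ r, ∃ j ≤ r, q = X 0 ^ i * X 1 ^ j}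

private lemma cont_eval (z : MvPolynomial (Fin 2) ℝ) :
    Continuous fun q : ℝ × ℝ => eval ![q.1, q.2] z := by
  induction z using MvPolynomial.induction_on with
  | C a => simpa using continuous_const
  | add p q hp hq => simpa [map_add, Pi.add_def] using hp.add hq
  | mul_X p n hp =>
      simp only [map_mul, eval_X]
      fin_cases n
      · simpa [Pi.mul_def] using hp.mul continuous_fst
      · simpa [Pi.mul_def] using hp.mul continuous_snd

private lemma eval_aeval_fst (z : MvPolynomial (Fin 2) ℝ) (a t : ℝ) :
    Polynomial.eval t (aeval ![Polynomial.X, Polynomial.C a] z) = eval ![t, a] z := by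
  induction z using MvPolynomial.induction_on with
  | C r => simp
  | add p q hp hq => simp [map_add, hp, hq]
  | mul_X p n hp => fin_cases n <;> simp [map_mul, hp]

private lemma eval_aeval_snd (z : MvPolynomial (Fin 2) ℝ) (a t : ℝ) :
    Polynomial.eval t (aeval ![Polynomial.C a, Polynomial.X] z) = eval ![a, t] z := by
  induction z using MvPolynomial.induction_on with
  | C r => simp
  | add p q hp hq => simp [map_add, hp, hq]
  | mul_X p n hp => fin_cases n <;> simp [map_mul, hp]

private lemma eq_zero_of_integral_zero {f : ℝ → ℝ} (hf : Continuous f)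
    (h0 : ∀ t ∈ Set.Icc (0:ℝ) 1, 0 ≤ f t)
    (hI : (∫ t in (0:ℝ)..1, f t) = 0) :
    ∀ t ∈ Set.Ioo (0:ℝ) 1, f t = 0 := by
  by_contra h
  push_neg at h
  obtain ⟨t₀, ht₀, hft₀⟩ := h
  have hfi : IntervalIntegrable f MeasureTheory.volume 0 1 := hf.intervalIntegrable _ _
  have hae : 0 ≤ᵐ[MeasureTheory.volume.restrict (Set.uIoc (0:ℝ) 1)] f := by
    refine MeasureTheory.ae_restrict_of_forall_mem measurableSet_uIoc ?_
    intro x hx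
    rw [Set.uIoc_of_le (by norm_num : (0:ℝ) ≤ 1)] at hx
    exact h0 x ⟨hx.1.le, hx.2⟩
  have hpos : 0 < ∫ t in (0:ℝ)..1, f t := by
    rw [integral_pos_iff_support_of_nonneg_ae' hae hfi]
    refine ⟨by norm_num, ?_⟩
    have hopen : IsOpen ({x | f x ≠ 0} ∩ Set.Ioo 0 1) :=
      (isOpen_ne.preimage hf).inter isOpen_Ioo
    have hne : ({x | f x ≠ 0} ∩ Set.Ioo 0 1).Nonempty := ⟨t₀, hft₀, ht₀⟩
    calc (0:ENNReal) < MeasureTheory.volume ({x | f x ≠ 0} ∩ Set.Ioo 0 1) :=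
          hopen.measure_pos _ hne
      _ ≤ MeasureTheory.volume (Function.support f ∩ Set.Ioc 0 1) := by
          apply MeasureTheory.measure_mono
          exact Set.inter_subset_inter (fun x hx => hx) Set.Ioo_subset_Ioc_self
  rw [hI] at hpos
  exact lt_irrefl 0 hpos

private lemma natDegree_aeval_fst_le {r : ℕ} {z : MvPolynomial (Fin 2) ℝ} (hz : z ∈ Qsp r)
    (a : ℝ) : (aeval ![Polynomial.X, Polynomial.C a] z).natDegree ≤ r := by
  induction hz using Submodule.span_induction with
  | mem q hq =>
      obtain ⟨i, hi, j, hj, rfl⟩ := hq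
      rw [map_mul, map_pow, map_pow, aeval_X, aeval_X]
      norm_num
      refine le_trans Polynomial.natDegree_mul_le ?_
      rw [Polynomial.natDegree_X_pow, ← Polynomial.C_pow, Polynomial.natDegree_C]
      omega
  | zero => simp
  | add x y hx hy ihx ihy =>
      rw [map_add]
      exact le_trans (Polynomial.natDegree_add_le _ _) (by omega)
  | smul c x hx ih =>
      rw [map_smul]; exact le_trans (Polynomial.natDegree_smul_le _ _) ih

private lemma natDegree_aeval_snd_le {r : ℕ} {z : MvPolynomial (Fin 2) ℝ} (hz : z ∈ Qsp r)
    (a : ℝ) : (aeval ![Polynomial.C a, Polynomial.X] z).natDegree ≤ r := by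
  induction hz using Submodule.span_induction with
  | mem q hq =>
      obtain ⟨i, hi, j, hj, rfl⟩ := hq
      rw [map_mul, map_pow, map_pow, aeval_X, aeval_X]
      norm_num
      refine le_trans Polynomial.natDegree_mul_le ?_
      rw [Polynomial.natDegree_X_pow, ← Polynomial.C_pow, Polynomial.natDegree_C]
      omega
  | zero => simp
  | add x y hx hy ihx ihy =>
      rw [map_add]
      exact le_trans (Polynomial.natDegree_add_le _ _) (by omega)
  | smul c x hx ih =>
      rw [map_smul]; exact le_trans (Polynomial.natDegree_smul_le _ _) ih

private lemma mem_Qsp_of_degreeOf_le {r : ℕ} {q : MvPolynomial (Fin 2) ℝ}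
    (h0 : degreeOf 0 q ≤ r) (h1 : degreeOf 1 q ≤ r) : q ∈ Qsp r := by
  rw [← support_sum_monomial_coeff q]
  apply Submodule.sum_mem
  intro m hm
  have hm0 : m 0 ≤ r := by
    refine le_trans ?_ h0
    rw [degreeOf_eq_sup]
    exact Finset.le_sup (f := fun m => m 0) hm
  have hm1 : m 1 ≤ r := by
    refine le_trans ?_ h1
    rw [degreeOf_eq_sup]
    exact Finset.le_sup (f := fun m => m 1) hm
  have hmono : (monomial m (coeff m q)) = (coeff m q) • (X 0 ^ (m 0) * X 1 ^ (m 1)) := by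
    rw [smul_eq_C_mul, monomial_eq]
    congr 1
    rw [Finsupp.prod_pow]
    exact Fin.prod_univ_two _
  rw [hmono]
  exact Submodule.smul_mem _ _ (Submodule.subset_span ⟨m 0, hm0, m 1, hm1, rfl⟩)

private lemma degreeOf_le_of_mem {r : ℕ} {z : MvPolynomial (Fin 2) ℝ} (hz : z ∈ Qsp r)
    (k : Fin 2) : degreeOf k z ≤ r := by
  have key : ∀ (l : Fin 2) (n : ℕ), degreeOf k ((X l : MvPolynomial (Fin 2) ℝ) ^ n)
      ≤ n * (if k = l then 1 else 0) := by
    intro l n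
    have := degreeOf_pow_le k (X l : MvPolynomial (Fin 2) ℝ) n
    rwa [degreeOf_X] at this
  induction hz using Submodule.span_induction with
  | mem q hq =>
      obtain ⟨i, hi, j, hj, rfl⟩ := hq
      refine le_trans (degreeOf_mul_le _ _ _) ?_
      match k with
      | 0 =>
        have h0 := key 0 i
        have h1 := key 1 j
        simp at h0 h1 ⊢
        omega
      | 1 =>
        have h0 := key 0 i
        have h1 := key 1 j
        simp at h0 h1 ⊢
        omega
  | zero => simp
  | add x y hx hy ihx ihy => exact le_trans (degreeOf_add_le _ _ _) (by omega)
  | smul c x hx ih =>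
      rw [smul_eq_C_mul]
      exact le_trans (degreeOf_C_mul_le _ _ _) ih

private lemma degreeOf0_mul {f g : MvPolynomial (Fin 2) ℝ} (hf : f ≠ 0) (hg : g ≠ 0) :
    degreeOf 0 (f * g) = degreeOf 0 f + degreeOf 0 g := by
  rw [← natDegree_finSuccEquiv, ← natDegree_finSuccEquiv, ← natDegree_finSuccEquiv, map_mul]
  refine Polynomial.natDegree_mul ?_ ?_
  · exact fun h => hf ((map_eq_zero_iff _ (finSuccEquiv ℝ 1).injective).mp h)
  · exact fun h => hg ((map_eq_zero_iff _ (finSuccEquiv ℝ 1).injective).mp h)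

private lemma swap_comp (a b : ℝ) :
    (![a, b] ∘ (Equiv.swap (0 : Fin 2) 1)) = ![b, a] := by
  funext i
  fin_cases i <;> simp [Equiv.swap_apply_left, Equiv.swap_apply_right]

private lemma rename_swap_swap (g : MvPolynomial (Fin 2) ℝ) :
    rename (Equiv.swap (0:Fin 2) 1) (rename (Equiv.swap (0:Fin 2) 1) g) = g := by
  rw [rename_rename]
  have : ((Equiv.swap (0:Fin 2) 1) : Fin 2 → Fin 2) ∘ (Equiv.swap (0:Fin 2) 1) = id := by
    funext i; simp [Equiv.swap_apply_self]
  rw [this, rename_id, AlgHom.id_apply]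

private lemma degreeOf1_eq (g : MvPolynomial (Fin 2) ℝ) :
    degreeOf 1 g = degreeOf 0 (rename (Equiv.swap (0:Fin 2) 1) g) := by
  have h := degreeOf_rename_of_injective (Equiv.injective (Equiv.swap (0:Fin 2) 1)) 1 (p := g)
  simp [Equiv.swap_apply_right] at h
  exact h.symm

private lemma rename_swap_ne_zero {f : MvPolynomial (Fin 2) ℝ} (hf : f ≠ 0) :
    rename (Equiv.swap (0:Fin 2) 1) f ≠ 0 := by
  intro h
  apply hf
  have := congrArg (rename (Equiv.swap (0:Fin 2) 1)) h
  rwa [rename_swap_swap, map_zero] at this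

private lemma degreeOf1_mul {f g : MvPolynomial (Fin 2) ℝ} (hf : f ≠ 0) (hg : g ≠ 0) :
    degreeOf 1 (f * g) = degreeOf 1 f + degreeOf 1 g := by
  rw [degreeOf1_eq, degreeOf1_eq f, degreeOf1_eq g, map_mul]
  exact degreeOf0_mul (rename_swap_ne_zero hf) (rename_swap_ne_zero hg)

private lemma deg0_X0 : degreeOf 0 (X 0 : MvPolynomial (Fin 2) ℝ) = 1 := by
  rw [← natDegree_finSuccEquiv, finSuccEquiv_X_zero, Polynomial.natDegree_X]

private lemma deg0_X0s : degreeOf 0 (X 0 - 1 : MvPolynomial (Fin 2) ℝ) = 1 := by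
  rw [← natDegree_finSuccEquiv, map_sub, map_one, finSuccEquiv_X_zero, ← Polynomial.C_1,
    Polynomial.natDegree_X_sub_C]

private lemma deg0_X1 : degreeOf 0 (X 1 : MvPolynomial (Fin 2) ℝ) = 0 := by
  rw [← natDegree_finSuccEquiv]
  rw [show (X 1 : MvPolynomial (Fin 2) ℝ) = X (Fin.succ 0) from rfl, finSuccEquiv_X_succ,
    Polynomial.natDegree_C]

private lemma deg0_X1s : degreeOf 0 (X 1 - 1 : MvPolynomial (Fin 2) ℝ) = 0 := by
  rw [← natDegree_finSuccEquiv, map_sub, map_one,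
    show (X 1 : MvPolynomial (Fin 2) ℝ) = X (Fin.succ 0) from rfl, finSuccEquiv_X_succ,
    ← Polynomial.C_1, ← Polynomial.C_sub, Polynomial.natDegree_C]

private lemma deg1_X0 : degreeOf 1 (X 0 : MvPolynomial (Fin 2) ℝ) = 0 := by
  rw [degreeOf1_eq, rename_X, Equiv.swap_apply_left]
  exact deg0_X1

private lemma deg1_X0s : degreeOf 1 (X 0 - 1 : MvPolynomial (Fin 2) ℝ) = 0 := by
  rw [degreeOf1_eq, map_sub, map_one, rename_X, Equiv.swap_apply_left]
  exact deg0_X1s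

private lemma deg1_X1 : degreeOf 1 (X 1 : MvPolynomial (Fin 2) ℝ) = 1 := by
  rw [degreeOf1_eq, rename_X, Equiv.swap_apply_right]
  exact deg0_X0

private lemma deg1_X1s : degreeOf 1 (X 1 - 1 : MvPolynomial (Fin 2) ℝ) = 1 := by
  rw [degreeOf1_eq, map_sub, map_one, rename_X, Equiv.swap_apply_right]
  exact deg0_X0s

private lemma factor_x (z : MvPolynomial (Fin 2) ℝ)
    (h0 : ∀ y : ℝ, eval ![0, y] z = 0) (h1 : ∀ y : ℝ, eval ![1, y] z = 0) :
    ∃ w : MvPolynomial (Fin 2) ℝ, z = X 0 * (X 0 - 1) * w := by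
  have key : ∀ c : ℝ, (∀ y : ℝ, eval ![c, y] z = 0) →
      Polynomial.eval (C c : MvPolynomial (Fin 1) ℝ) (finSuccEquiv ℝ 1 z) = 0 := by
    intro c hc
    apply MvPolynomial.funext
    intro x
    rw [map_zero]
    have hcomm : eval x (Polynomial.eval (C c) (finSuccEquiv ℝ 1 z))
        = Polynomial.eval c (Polynomial.map (eval x) (finSuccEquiv ℝ 1 z)) := by
      rw [Polynomial.eval, Polynomial.hom_eval₂, Polynomial.eval_map]
      simp [Polynomial.eval₂]
    rw [hcomm, ← eval_eq_eval_mv_eval']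
    have : (Fin.cons c x : Fin 2 → ℝ) = ![c, x 0] := by
      funext i
      refine Fin.cases ?_ ?_ i
      · rfl
      · intro j
        fin_cases j; rfl
    rw [this]
    exact hc (x 0)
  have hr0 : Polynomial.X ∣ finSuccEquiv ℝ 1 z := by
    rw [Polynomial.X_dvd_iff, Polynomial.coeff_zero_eq_eval_zero]
    have := key 0 h0
    rwa [map_zero] at this
  have hr1 : (Polynomial.X - Polynomial.C 1) ∣ finSuccEquiv ℝ 1 z := by
    rw [Polynomial.dvd_iff_isRoot]
    have := key 1 h1
    rwa [map_one] at this
  have hcop : IsCoprime (Polynomial.X : Polynomial (MvPolynomial (Fin 1) ℝ))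
      (Polynomial.X - Polynomial.C 1) := by
    refine ⟨1, -1, ?_⟩
    rw [Polynomial.C_1]
    ring
  obtain ⟨ψ, hψ⟩ := hcop.mul_dvd hr0 hr1
  refine ⟨(finSuccEquiv ℝ 1).symm ψ, (finSuccEquiv ℝ 1).injective ?_⟩
  rw [hψ, map_mul, map_mul, map_sub, finSuccEquiv_X_zero, AlgEquiv.apply_symm_apply]
  simp

private lemma factor_y (z : MvPolynomial (Fin 2) ℝ)
    (h0 : ∀ x : ℝ, eval ![x, 0] z = 0) (h1 : ∀ x : ℝ, eval ![x, 1] z = 0) :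
    ∃ w : MvPolynomial (Fin 2) ℝ, z = X 1 * (X 1 - 1) * w := by
  obtain ⟨w, hw⟩ := factor_x (rename (Equiv.swap (0:Fin 2) 1) z)
    (fun y => by rw [eval_rename, swap_comp]; exact h0 y)
    (fun y => by rw [eval_rename, swap_comp]; exact h1 y)
  refine ⟨rename (Equiv.swap (0:Fin 2) 1) w, ?_⟩
  have := congrArg (rename (Equiv.swap (0:Fin 2) 1)) hw
  rw [rename_swap_swap] at this
  rw [this, map_mul, map_mul, map_sub, map_one, rename_X, Equiv.swap_apply_left]

private lemma univ_edge {p : ℕ} {q : Polynomial ℝ} (hdeg : q.natDegree ≤ p + 2)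
    (h0 : q.eval 0 = 0) (h1 : q.eval 1 = 0)
    (horth : ∀ γ : Polynomial ℝ, γ.natDegree ≤ p →
      (∫ t in (0:ℝ)..1, q.eval t * γ.eval t) = 0) :
    q = 0 := by
  by_contra hq
  have hd0 : Polynomial.X ∣ q := Polynomial.X_dvd_iff.mpr
    (by rwa [Polynomial.coeff_zero_eq_eval_zero])
  have hd1 : (Polynomial.X - Polynomial.C 1) ∣ q := Polynomial.dvd_iff_isRoot.mpr h1
  have hcop : IsCoprime (Polynomial.X : Polynomial ℝ) (Polynomial.X - Polynomial.C 1) := by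
    refine ⟨1, -1, ?_⟩
    rw [Polynomial.C_1]; ring
  obtain ⟨u, hu⟩ := hcop.mul_dvd hd0 hd1
  have hu0 : u ≠ 0 := fun h => hq (by rw [hu, h, mul_zero])
  have hXn : (Polynomial.X * (Polynomial.X - Polynomial.C (1:ℝ))) ≠ 0 :=
    mul_ne_zero Polynomial.X_ne_zero (Polynomial.X_sub_C_ne_zero 1)
  have hdu : u.natDegree ≤ p := by
    have h2 : q.natDegree = 2 + u.natDegree := by
      rw [hu, Polynomial.natDegree_mul hXn hu0,
        Polynomial.natDegree_mul Polynomial.X_ne_zero (Polynomial.X_sub_C_ne_zero 1),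
        Polynomial.natDegree_X, Polynomial.natDegree_X_sub_C]
    omega
  have hI := horth u hdu
  have hfI : (∫ t in (0:ℝ)..1, t * (1 - t) * (u.eval t)^2) = 0 := by
    have : ∀ t : ℝ, t * (1 - t) * (u.eval t)^2 = -(q.eval t * u.eval t) := by
      intro t
      rw [hu]
      simp only [Polynomial.eval_mul, Polynomial.eval_sub, Polynomial.eval_X,
        Polynomial.eval_C]
      ring
    simp_rw [this]
    rw [intervalIntegral.integral_neg, hI, neg_zero]
  have hcont : Continuous fun t : ℝ => t * (1 - t) * (u.eval t)^2 :=
    (continuous_id.mul (continuous_const.sub continuous_id)).mul ((u.continuous).pow 2)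
  have hnn : ∀ t ∈ Set.Icc (0:ℝ) 1, 0 ≤ t * (1 - t) * (u.eval t)^2 := by
    intro t ht
    have h1t : (0:ℝ) ≤ 1 - t := by linarith [ht.2]
    have := ht.1
    positivity
  have hzero := eq_zero_of_integral_zero hcont hnn hfI
  have hroots : ∀ t ∈ Set.Ioo (0:ℝ) 1, u.IsRoot t := by
    intro t ht
    have h := hzero t ht
    have hpos : 0 < t * (1 - t) := mul_pos ht.1 (by linarith [ht.2])
    have : (u.eval t)^2 = 0 := by
      by_contra hne
      exact hne (by nlinarith [sq_nonneg (u.eval t)])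
    exact pow_eq_zero_iff (n := 2) (by norm_num) |>.mp this
  exact hu0 (Polynomial.eq_zero_of_infinite_isRoot u
    ((Set.Ioo_infinite (by norm_num : (0:ℝ) < 1)).mono hroots))

set_option maxHeartbeats 1600000 in
/-- Uniqueness for the projector `R_K^0`: a polynomial in `Q_{p+2}` on the unit
square vanishing at the four vertices, `L²`-orthogonal to `Q_p` in the
interior, and orthogonal on each edge to all polynomials of degree `≤ p`,
must vanish. -/
theorem vertex_bubble_unisolvence (p : ℕ) (z : MvPolynomial (Fin 2) ℝ)
    (hzQ : z ∈ Qsp (p + 2))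
    (hvert : ∀ v : Fin 2 → Fin 2, eval (fun i => ((v i : ℕ) : ℝ)) z = 0)
    (hint : ∀ w ∈ Qsp p,
      (∫ x in (0:ℝ)..1, ∫ y in (0:ℝ)..1, eval ![x, y] z * eval ![x, y] w) = 0)
    (hbd : ∀ γ : Polynomial ℝ, γ.natDegree ≤ p →
      (∫ t in (0:ℝ)..1, eval ![t, 0] z * γ.eval t) = 0 ∧
      (∫ t in (0:ℝ)..1, eval ![t, 1] z * γ.eval t) = 0 ∧
      (∫ t in (0:ℝ)..1, eval ![0, t] z * γ.eval t) = 0 ∧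
      (∫ t in (0:ℝ)..1, eval ![1, t] z * γ.eval t) = 0) :
    z = 0 := by
  by_contra hz0
  -- vertex values
  have hv : ∀ a b : Fin 2, eval ![((a : ℕ) : ℝ), ((b : ℕ) : ℝ)] z = 0 := by
    intro a b
    have h := hvert ![a, b]
    have hfe : (fun i => (((![a, b] : Fin 2 → Fin 2) i : ℕ) : ℝ))
        = ![((a:ℕ):ℝ), ((b:ℕ):ℝ)] := by
      funext i; fin_cases i <;> rfl
    rwa [hfe] at h
  -- the four edge restrictions vanish
  have hbot : ∀ x : ℝ, eval ![x, 0] z = 0 := by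
    intro x
    have hq : aeval ![Polynomial.X, Polynomial.C (0:ℝ)] z = 0 := by
      refine univ_edge (natDegree_aeval_fst_le hzQ 0) ?_ ?_ ?_
      · rw [eval_aeval_fst]; simpa using hv 0 0
      · rw [eval_aeval_fst]; simpa using hv 1 0
      · intro γ hγ
        simp only [eval_aeval_fst]
        exact (hbd γ hγ).1
    rw [← eval_aeval_fst z 0 x, hq, Polynomial.eval_zero]
  have htop : ∀ x : ℝ, eval ![x, 1] z = 0 := by
    intro x
    have hq : aeval ![Polynomial.X, Polynomial.C (1:ℝ)] z = 0 := by
      refine univ_edge (natDegree_aeval_fst_le hzQ 1) ?_ ?_ ?_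
      · rw [eval_aeval_fst]; simpa using hv 0 1
      · rw [eval_aeval_fst]; simpa using hv 1 1
      · intro γ hγ
        simp only [eval_aeval_fst]
        exact (hbd γ hγ).2.1
    rw [← eval_aeval_fst z 1 x, hq, Polynomial.eval_zero]
  have hleft : ∀ y : ℝ, eval ![0, y] z = 0 := by
    intro y
    have hq : aeval ![Polynomial.C (0:ℝ), Polynomial.X] z = 0 := by
      refine univ_edge (natDegree_aeval_snd_le hzQ 0) ?_ ?_ ?_
      · rw [eval_aeval_snd]; simpa using hv 0 0
      · rw [eval_aeval_snd]; simpa using hv 0 1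
      · intro γ hγ
        simp only [eval_aeval_snd]
        exact (hbd γ hγ).2.2.1
    rw [← eval_aeval_snd z 0 y, hq, Polynomial.eval_zero]
  have hright : ∀ y : ℝ, eval ![1, y] z = 0 := by
    intro y
    have hq : aeval ![Polynomial.C (1:ℝ), Polynomial.X] z = 0 := by
      refine univ_edge (natDegree_aeval_snd_le hzQ 1) ?_ ?_ ?_
      · rw [eval_aeval_snd]; simpa using hv 1 0
      · rw [eval_aeval_snd]; simpa using hv 1 1
      · intro γ hγ
        simp only [eval_aeval_snd]
        exact (hbd γ hγ).2.2.2
    rw [← eval_aeval_snd z 1 y, hq, Polynomial.eval_zero]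
  -- factor out the x-bubble
  obtain ⟨w, hw⟩ := factor_x z hleft hright
  -- w vanishes on the horizontal edges
  have hwbot : ∀ x : ℝ, eval ![x, 0] w = 0 := by
    have hroots : ∀ x ∈ Set.Ioo (0:ℝ) 1,
        (aeval ![Polynomial.X, Polynomial.C (0:ℝ)] w).IsRoot x := by
      intro x hx
      have h := hbot x
      rw [hw] at h
      simp only [map_mul, map_sub, map_one, eval_X, Matrix.cons_val_zero] at h
      have hxne : x * (x - 1) ≠ 0 :=
        mul_ne_zero (ne_of_gt hx.1) (by intro hc; have := hx.2; nlinarith)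
      have : eval ![x, 0] w = 0 := by
        rcases mul_eq_zero.mp h with h' | h'
        · exact absurd h' hxne
        · exact h'
      rw [Polynomial.IsRoot, eval_aeval_fst]
      exact this
    have hq : aeval ![Polynomial.X, Polynomial.C (0:ℝ)] w = 0 :=
      Polynomial.eq_zero_of_infinite_isRoot _
        ((Set.Ioo_infinite (by norm_num : (0:ℝ) < 1)).mono hroots)
    intro x
    rw [← eval_aeval_fst w 0 x, hq, Polynomial.eval_zero]
  have hwtop : ∀ x : ℝ, eval ![x, 1] w = 0 := by
    have hroots : ∀ x ∈ Set.Ioo (0:ℝ) 1,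
        (aeval ![Polynomial.X, Polynomial.C (1:ℝ)] w).IsRoot x := by
      intro x hx
      have h := htop x
      rw [hw] at h
      simp only [map_mul, map_sub, map_one, eval_X, Matrix.cons_val_zero] at h
      have hxne : x * (x - 1) ≠ 0 :=
        mul_ne_zero (ne_of_gt hx.1) (by intro hc; have := hx.2; nlinarith)
      have : eval ![x, 1] w = 0 := by
        rcases mul_eq_zero.mp h with h' | h'
        · exact absurd h' hxne
        · exact h'
      rw [Polynomial.IsRoot, eval_aeval_fst]
      exact this
    have hq : aeval ![Polynomial.X, Polynomial.C (1:ℝ)] w = 0 :=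
      Polynomial.eq_zero_of_infinite_isRoot _
        ((Set.Ioo_infinite (by norm_num : (0:ℝ) < 1)).mono hroots)
    intro x
    rw [← eval_aeval_fst w 1 x, hq, Polynomial.eval_zero]
  -- factor out the y-bubble
  obtain ⟨φ, hφ⟩ := factor_y w hwbot hwtop
  have hfact : z = X 0 * (X 0 - 1) * (X 1 * (X 1 - 1) * φ) := by rw [hw, hφ]
  -- nonzeroness of the factors
  have hφ0 : φ ≠ 0 := by
    intro h
    exact hz0 (by rw [hfact, h, mul_zero, mul_zero])
  have hX0 : (X 0 : MvPolynomial (Fin 2) ℝ) ≠ 0 := X_ne_zero _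
  have hX1 : (X 1 : MvPolynomial (Fin 2) ℝ) ≠ 0 := X_ne_zero _
  have hX0s : (X 0 - 1 : MvPolynomial (Fin 2) ℝ) ≠ 0 := by
    intro h
    have := congrArg (eval ![(0:ℝ), 0]) h
    simp at this
  have hX1s : (X 1 - 1 : MvPolynomial (Fin 2) ℝ) ≠ 0 := by
    intro h
    have := congrArg (eval ![(0:ℝ), 0]) h
    simp at this
  -- degree bounds for φ
  have hB1φ : (X 1 * (X 1 - 1) * φ : MvPolynomial (Fin 2) ℝ) ≠ 0 :=
    mul_ne_zero (mul_ne_zero hX1 hX1s) hφ0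
  have hX0m : (X 0 * (X 0 - 1) : MvPolynomial (Fin 2) ℝ) ≠ 0 := mul_ne_zero hX0 hX0s
  have hX1m : (X 1 * (X 1 - 1) : MvPolynomial (Fin 2) ℝ) ≠ 0 := mul_ne_zero hX1 hX1s
  have hdz0 : degreeOf 0 z ≤ p + 2 := degreeOf_le_of_mem hzQ 0
  have hdz1 : degreeOf 1 z ≤ p + 2 := degreeOf_le_of_mem hzQ 1
  have hdeg0 : degreeOf 0 φ ≤ p := by
    have : degreeOf 0 z = 2 + degreeOf 0 φ := by
      rw [hfact, degreeOf0_mul hX0m hB1φ, degreeOf0_mul hX0 hX0s,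
        degreeOf0_mul hX1m hφ0, degreeOf0_mul hX1 hX1s,
        deg0_X0, deg0_X0s, deg0_X1, deg0_X1s]
      omega
    omega
  have hdeg1 : degreeOf 1 φ ≤ p := by
    have : degreeOf 1 z = 2 + degreeOf 1 φ := by
      rw [hfact, degreeOf1_mul hX0m hB1φ, degreeOf1_mul hX0 hX0s,
        degreeOf1_mul hX1m hφ0, degreeOf1_mul hX1 hX1s,
        deg1_X0, deg1_X0s, deg1_X1, deg1_X1s]
      omega
    omega
  have hφmem : φ ∈ Qsp p := mem_Qsp_of_degreeOf_le hdeg0 hdeg1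
  -- interior orthogonality kills φ
  have hIz := hint φ hφmem
  have hkey : ∀ x y : ℝ, eval ![x, y] z * eval ![x, y] φ
      = (x * (x - 1)) * (y * (y - 1)) * (eval ![x, y] φ)^2 := by
    intro x y
    rw [hfact]
    simp only [map_mul, map_sub, map_one, eval_X, Matrix.cons_val_zero, Matrix.cons_val_one,
      Matrix.head_cons]
    ring
  have hFnn : ∀ x ∈ Set.Icc (0:ℝ) 1, ∀ y ∈ Set.Icc (0:ℝ) 1,
      0 ≤ eval ![x, y] z * eval ![x, y] φ := by
    intro x hx y hy
    rw [hkey]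
    have h1 : x * (x - 1) ≤ 0 := by nlinarith [hx.1, hx.2]
    have h2 : y * (y - 1) ≤ 0 := by nlinarith [hy.1, hy.2]
    have h3 : 0 ≤ (x * (x - 1)) * (y * (y - 1)) := by nlinarith
    exact mul_nonneg h3 (sq_nonneg _)
  have hFcont : Continuous (Function.uncurry
      (fun x y : ℝ => eval ![x, y] z * eval ![x, y] φ)) :=
    (cont_eval z).mul (cont_eval φ)
  have hgcont : Continuous fun x : ℝ => ∫ y in (0:ℝ)..1, eval ![x, y] z * eval ![x, y] φ :=
    intervalIntegral.continuous_parametric_intervalIntegral_of_continuous' hFcont 0 1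
  have hgnn : ∀ x ∈ Set.Icc (0:ℝ) 1,
      0 ≤ ∫ y in (0:ℝ)..1, eval ![x, y] z * eval ![x, y] φ := by
    intro x hx
    exact intervalIntegral.integral_nonneg (by norm_num) (fun y hy => hFnn x hx y hy)
  have hgzero := eq_zero_of_integral_zero hgcont hgnn hIz
  have hφvan : ∀ x ∈ Set.Ioo (0:ℝ) 1, ∀ y ∈ Set.Ioo (0:ℝ) 1, eval ![x, y] φ = 0 := by
    intro x hx y hy
    have hxIcc : x ∈ Set.Icc (0:ℝ) 1 := ⟨hx.1.le, hx.2.le⟩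
    have hFxcont : Continuous fun y : ℝ => eval ![x, y] z * eval ![x, y] φ := by
      have hc : Continuous fun y : ℝ => ((x, y) : ℝ × ℝ) :=
        continuous_const.prodMk continuous_id
      have h1 : Continuous fun y : ℝ => eval ![x, y] z := by
        have := (cont_eval z).comp hc
        simpa [Function.comp_def] using this
      have h2 : Continuous fun y : ℝ => eval ![x, y] φ := by
        have := (cont_eval φ).comp hc
        simpa [Function.comp_def] using this
      exact h1.mul h2
    have hFzero := eq_zero_of_integral_zero hFxcont (fun y hy => hFnn x hxIcc y hy)
      (hgzero x hx)
    have h := hFzero y hy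
    rw [hkey] at h
    have hxne : x * (x - 1) ≠ 0 :=
      mul_ne_zero (ne_of_gt hx.1) (by intro hc; have := hx.2; nlinarith)
    have hyne : y * (y - 1) ≠ 0 :=
      mul_ne_zero (ne_of_gt hy.1) (by intro hc; have := hy.2; nlinarith)
    have hsq : (eval ![x, y] φ)^2 = 0 := by
      rcases mul_eq_zero.mp h with h' | h'
      · rcases mul_eq_zero.mp h' with h'' | h''
        · exact absurd h'' hxne
        · exact absurd h'' hyne
      · exact h'
    exact pow_eq_zero_iff (n := 2) (by norm_num) |>.mp hsq
  have hφall : ∀ x y : ℝ, eval ![x, y] φ = 0 := by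
    have hstep1 : ∀ y ∈ Set.Ioo (0:ℝ) 1, ∀ x : ℝ, eval ![x, y] φ = 0 := by
      intro y hy
      have hq : aeval ![Polynomial.X, Polynomial.C y] φ = 0 := by
        refine Polynomial.eq_zero_of_infinite_isRoot _
          ((Set.Ioo_infinite (by norm_num : (0:ℝ) < 1)).mono ?_)
        intro x hx
        rw [Set.mem_setOf_eq, Polynomial.IsRoot, eval_aeval_fst]
        exact hφvan x hx y hy
      intro x
      rw [← eval_aeval_fst φ y x, hq, Polynomial.eval_zero]
    intro x y
    have hq : aeval ![Polynomial.C x, Polynomial.X] φ = 0 := by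
      refine Polynomial.eq_zero_of_infinite_isRoot _
        ((Set.Ioo_infinite (by norm_num : (0:ℝ) < 1)).mono ?_)
      intro y' hy'
      rw [Set.mem_setOf_eq, Polynomial.IsRoot, eval_aeval_snd]
      exact hstep1 y' hy' x
    rw [← eval_aeval_snd φ x y, hq, Polynomial.eval_zero]
  have hφz : φ = 0 := by
    apply MvPolynomial.funext
    intro g
    rw [map_zero]
    have hgeq : g = ![g 0, g 1] := by
      funext i; fin_cases i <;> rfl
    rw [hgeq]
    exact hφall (g 0) (g 1)
  exact hz0 (by rw [hfact, hφz, mul_zero, mul_zero])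
end

section
/- Let U, V be Hilbert spaces, U_h ⊆ U and V_h ⊆ V closed subspaces, and B : U × V → ℝ a bounded bilinear form with |B(u,v)| ≤ C‖u‖‖v‖ satisfying sup_{v∈V, v≠0} B(u,v)/‖v‖ ≥ α‖u‖ for all u ∈ U. Suppose there exists a bounded linear projector Π : V → V_h with ‖Πv‖ ≤ c‖v‖ for all v ∈ V and B(w_h, v − Πv) = 0 for all w_h ∈ U_h, v ∈ V. Then sup_{v_h ∈ V_h, v_h ≠ 0} B(u_h, v_h)/‖v_h‖ ≥ (α/c)‖u_h‖ for all u_h ∈ U_h. -/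
/-- Fortin's criterion: a bounded projector `Π : V → V_h` preserving the
bilinear form against discrete trial functions transfers the continuous
trial-side inf-sup condition to the discrete level, with constant `α/c`. -/
theorem fortin_criterion
    {U V : Type*} [NormedAddCommGroup U] [InnerProductSpace ℝ U] [CompleteSpace U]
    [NormedAddCommGroup V] [InnerProductSpace ℝ V] [CompleteSpace V]
    (Uh : Submodule ℝ U) (Vh : Submodule ℝ V)
    (hUh : IsClosed (Uh : Set U)) (hVh : IsClosed (Vh : Set V))
    (B : U →L[ℝ] V →L[ℝ] ℝ) (C α c : ℝ) (hα : 0 < α) (hc : 0 < c)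
    (hcont : ∀ u v, |B u v| ≤ C * ‖u‖ * ‖v‖)
    (hinfsup : ∀ u : U, α * ‖u‖ ≤ ⨆ v : {v : V // v ≠ 0}, B u v.1 / ‖v.1‖)
    (Pr : V →L[ℝ] V) (hrange : ∀ v : V, Pr v ∈ Vh)
    (hproj : ∀ v ∈ Vh, Pr v = v)
    (hbound : ∀ v : V, ‖Pr v‖ ≤ c * ‖v‖)
    (horth : ∀ wh ∈ Uh, ∀ v : V, B wh (v - Pr v) = 0) :
    ∀ uh ∈ Uh, (α / c) * ‖uh‖ ≤
      ⨆ vh : {vh : V // vh ∈ Vh ∧ vh ≠ 0}, B uh vh.1 / ‖vh.1‖ := by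
  intro uh huh
  have hBv : ∀ v : V, B uh v = B uh (Pr v) := by
    intro v
    have h := horth uh huh v
    have h2 : B uh v - B uh (Pr v) = 0 := by simpa [map_sub] using h
    linarith
  by_cases hne : Nonempty {vh : V // vh ∈ Vh ∧ vh ≠ 0}
  · obtain ⟨⟨v0, hv0, hv0ne⟩⟩ := hne
    set S := ⨆ vh : {vh : V // vh ∈ Vh ∧ vh ≠ 0}, B uh vh.1 / ‖vh.1‖ with hSdef
    have hbdd : BddAbove (Set.range fun vh : {vh : V // vh ∈ Vh ∧ vh ≠ 0} =>
        B uh vh.1 / ‖vh.1‖) := by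
      refine ⟨C * ‖uh‖, ?_⟩
      rintro x ⟨⟨v, hv, hvne⟩, rfl⟩
      have hvpos : 0 < ‖v‖ := norm_pos_iff.mpr hvne
      rw [div_le_iff₀ hvpos]
      calc B uh v ≤ |B uh v| := le_abs_self _
        _ ≤ C * ‖uh‖ * ‖v‖ := hcont uh v
    have hS0 : 0 ≤ S := by
      have h1 : B uh v0 / ‖v0‖ ≤ S := le_ciSup hbdd ⟨v0, hv0, hv0ne⟩
      have h2 : B uh (-v0) / ‖-v0‖ ≤ S :=
        le_ciSup hbdd ⟨-v0, neg_mem hv0, neg_ne_zero.mpr hv0ne⟩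
      rw [map_neg, norm_neg, neg_div] at h2
      linarith
    have key : ∀ v : {v : V // v ≠ 0}, B uh v.1 / ‖v.1‖ ≤ c * S := by
      rintro ⟨v, hvne⟩
      have hvpos : 0 < ‖v‖ := norm_pos_iff.mpr hvne
      by_cases hP : Pr v = 0
      · simp only [hBv v, hP, map_zero, zero_div]
        positivity
      · have hPpos : 0 < ‖Pr v‖ := norm_pos_iff.mpr hP
        by_cases hBpos : 0 ≤ B uh (Pr v)
        · have h1 : B uh (Pr v) / ‖Pr v‖ ≤ S := le_ciSup hbdd ⟨Pr v, hrange v, hP⟩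
          have hBeq : B uh (Pr v) = (B uh (Pr v) / ‖Pr v‖) * ‖Pr v‖ :=
            (div_mul_cancel₀ _ hPpos.ne').symm
          have hdiv0 : 0 ≤ B uh (Pr v) / ‖Pr v‖ := div_nonneg hBpos hPpos.le
          rw [hBv v, div_le_iff₀ hvpos]
          nlinarith [hbound v, hS0]
        · rw [hBv v]
          have : B uh (Pr v) / ‖v‖ ≤ 0 :=
            div_nonpos_of_nonpos_of_nonneg (le_of_not_ge hBpos) hvpos.le
          nlinarith
    have hnev : Nonempty {v : V // v ≠ 0} := ⟨⟨v0, hv0ne⟩⟩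
    have hsup : (⨆ v : {v : V // v ≠ 0}, B uh v.1 / ‖v.1‖) ≤ c * S := ciSup_le key
    have hchain : α * ‖uh‖ ≤ c * S := (hinfsup uh).trans hsup
    rw [div_mul_eq_mul_div, div_le_iff₀ hc]
    linarith
  · haveI : IsEmpty {vh : V // vh ∈ Vh ∧ vh ≠ 0} := not_nonempty_iff.mp hne
    have hVh0 : ∀ v ∈ Vh, v = 0 := by
      intro v hv
      by_contra h
      exact hne ⟨⟨v, hv, h⟩⟩
    have hB0 : ∀ v : V, B uh v = 0 := fun v => by
      rw [hBv v, hVh0 _ (hrange v), map_zero]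
    have hsup0 : (⨆ v : {v : V // v ≠ 0}, B uh v.1 / ‖v.1‖) = 0 := by
      by_cases hv : Nonempty {v : V // v ≠ 0}
      · have : ∀ v : {v : V // v ≠ 0}, B uh v.1 / ‖v.1‖ = 0 := fun v => by
          rw [hB0, zero_div]
        simp [this]
      · haveI : IsEmpty {v : V // v ≠ 0} := not_nonempty_iff.mp hv
        exact Real.iSup_of_isEmpty _
    have huh0 : uh = 0 := by
      have h := hinfsup uh
      rw [hsup0] at h
      have hn : ‖uh‖ ≤ 0 := by nlinarith
      simpa using le_antisymm hn (norm_nonneg _)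
    rw [huh0]
    simp [Real.iSup_of_isEmpty]
end

section
/- Under the hypotheses of Fortin's criterion (continuous inf-sup with constant α, continuity constant C, Fortin projector Π : V → V_h with norm ≤ c and B(w_h, v − Πv) = 0 for all w_h ∈ U_h), if u ∈ U satisfies B(u,v) = L(v) for all v ∈ V and u_h ∈ U_h satisfies B(u_h, v_h) = L(v_h) for all v_h ∈ V_h, then ‖u − u_h‖ ≤ (1 + Cc/α) inf_{w_h ∈ U_h} ‖u − w_h‖. -/
/-- Quasi-optimality of the Petrov–Galerkin approximation under Fortin's
criterion: `‖u − u_h‖ ≤ (1 + Cc/α) inf_{w_h ∈ U_h} ‖u − w_h‖`. -/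
theorem petrov_galerkin_quasi_optimality
    {U V : Type*} [NormedAddCommGroup U] [InnerProductSpace ℝ U] [CompleteSpace U]
    [NormedAddCommGroup V] [InnerProductSpace ℝ V] [CompleteSpace V]
    (Uh : Submodule ℝ U) (Vh : Submodule ℝ V)
    (hUh : IsClosed (Uh : Set U)) (hVh : IsClosed (Vh : Set V))
    (B : U →L[ℝ] V →L[ℝ] ℝ) (C α c : ℝ) (hα : 0 < α) (hc : 0 < c)
    (hcont : ∀ u v, |B u v| ≤ C * ‖u‖ * ‖v‖)
    (hinfsup : ∀ u : U, α * ‖u‖ ≤ ⨆ v : {v : V // v ≠ 0}, B u v.1 / ‖v.1‖)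
    (Pr : V →L[ℝ] V) (hrange : ∀ v : V, Pr v ∈ Vh)
    (hproj : ∀ v ∈ Vh, Pr v = v)
    (hbound : ∀ v : V, ‖Pr v‖ ≤ c * ‖v‖)
    (horth : ∀ wh ∈ Uh, ∀ v : V, B wh (v - Pr v) = 0)
    (L : V →L[ℝ] ℝ) (u : U) (uh : U) (huh : uh ∈ Uh)
    (hu : ∀ v : V, B u v = L v)
    (hdiscrete : ∀ vh ∈ Vh, B uh vh = L vh) :
    ‖u - uh‖ ≤ (1 + C * c / α) * ⨅ wh : Uh, ‖u - (wh : U)‖ := by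
  have hbdd : BddBelow (Set.range fun wh : Uh => ‖u - (wh : U)‖) :=
    ⟨0, by rintro x ⟨wh, rfl⟩; exact norm_nonneg _⟩
  by_cases h : u = uh
  · -- trivial case: infimum is 0 and LHS is 0
    have h1 : (⨅ wh : Uh, ‖u - (wh : U)‖) ≤ 0 := by
      have := ciInf_le hbdd (⟨uh, huh⟩ : Uh)
      simpa [h] using this
    have h2 : 0 ≤ (⨅ wh : Uh, ‖u - (wh : U)‖) :=
      le_ciInf fun wh => norm_nonneg _
    have h3 : (⨅ wh : Uh, ‖u - (wh : U)‖) = 0 := le_antisymm h1 h2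
    rw [h3, mul_zero, h, sub_self, norm_zero]
  · have he0 : u - uh ≠ 0 := sub_ne_zero.mpr h
    -- V is nontrivial
    have hVnt : ∃ v : V, v ≠ 0 := by
      by_contra hno
      push_neg at hno
      have : IsEmpty {v : V // v ≠ 0} := ⟨fun v => v.2 (hno v.1)⟩
      have hs := hinfsup (u - uh)
      rw [Real.iSup_of_isEmpty] at hs
      have : 0 < α * ‖u - uh‖ := mul_pos hα (norm_pos_iff.mpr he0)
      linarith
    obtain ⟨v0, hv0⟩ := hVnt
    -- C ≥ 0
    have hC : 0 ≤ C := by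
      have h1 := hcont (u - uh) v0
      have h2 : 0 < ‖u - uh‖ := norm_pos_iff.mpr he0
      have h3 : 0 < ‖v0‖ := norm_pos_iff.mpr hv0
      nlinarith [mul_pos h2 h3, le_trans (abs_nonneg _) h1]
    -- key estimate
    have key : ∀ wh : Uh, ‖u - uh‖ ≤ (1 + C * c / α) * ‖u - (wh : U)‖ := by
      intro ⟨wh, hwh⟩
      have hmem : wh - uh ∈ Uh := Uh.sub_mem hwh huh
      have hsup : (⨆ v : {v : V // v ≠ 0}, B (wh - uh) v.1 / ‖v.1‖)
          ≤ C * c * ‖u - wh‖ := by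
        apply Real.iSup_le
        · rintro ⟨v, hv⟩
          have hvpos : 0 < ‖v‖ := norm_pos_iff.mpr hv
          have e1 : B (wh - uh) v = B (wh - uh) (Pr v) := by
            have := horth (wh - uh) hmem v
            rw [map_sub] at this
            linarith
          have e2 : B (wh - uh) (Pr v) = B (wh - u) (Pr v) := by
            have h1 : B uh (Pr v) = L (Pr v) := hdiscrete _ (hrange v)
            have h2 : B u (Pr v) = L (Pr v) := hu _
            simp only [map_sub, ContinuousLinearMap.sub_apply]
            linarith
          have e3 : |B (wh - u) (Pr v)| ≤ C * ‖wh - u‖ * (c * ‖v‖) := by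
            calc |B (wh - u) (Pr v)| ≤ C * ‖wh - u‖ * ‖Pr v‖ := hcont _ _
              _ ≤ C * ‖wh - u‖ * (c * ‖v‖) := by
                  apply mul_le_mul_of_nonneg_left (hbound v)
                  positivity
          have hn : ‖wh - u‖ = ‖u - wh‖ := norm_sub_rev _ _
          rw [div_le_iff₀ hvpos, e1, e2]
          calc B (wh - u) (Pr v) ≤ |B (wh - u) (Pr v)| := le_abs_self _
            _ ≤ C * ‖wh - u‖ * (c * ‖v‖) := e3
            _ = C * c * ‖u - wh‖ * ‖v‖ := by rw [hn]; ring
        · positivity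
      have h4 := (hinfsup (wh - uh)).trans hsup
      have h5 : ‖wh - uh‖ ≤ C * c * ‖u - wh‖ / α := by
        rw [le_div_iff₀ hα]; nlinarith
      calc ‖u - uh‖ = ‖(u - wh) + (wh - uh)‖ := by rw [sub_add_sub_cancel]
        _ ≤ ‖u - wh‖ + ‖wh - uh‖ := norm_add_le _ _
        _ ≤ ‖u - wh‖ + C * c * ‖u - wh‖ / α := by linarith
        _ = (1 + C * c / α) * ‖u - wh‖ := by field_simp
    have hfac : 0 ≤ 1 + C * c / α := by positivity
    rw [Real.mul_iInf_of_nonneg hfac]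
    exact le_ciInf key
end
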